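/- arXiv:2501.10877 — 2 statements merged into one kernel-verified Lean document; each statement's English description precedes it below -/
import Mathlib

section
/- Let {ğ_k}_{k=1}^K be nonzero pairwise orthogonal vectors in ℝ^d obtained from vectors {g_k} by a modified Gram–Schmidt process, so that g_k = c_k ğ_k + Σ_{i<k} (⟨g_k, ğ_i⟩/⟨ğ_i, ğ_i⟩) ğ_i where c_k = d_k − Σ_{i<k} ⟨g_k, ğ_i⟩/⟨ğ_i, ğ_i⟩ for given positive scalars d_k. Let λ_k* = (1/‖ğ_k‖²)/(Σ_i 1/‖ğ_i‖²) and 𝔡 = Σ_k λ_k* ğ_k. Then ⟨g_k, 𝔡⟩ = d_k / (Σ_i 1/‖ğ_i‖²) for all k. -/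
open scoped InnerProductSpace
open Finset

/-- With the modified Gram–Schmidt decomposition
`g k = c k • ğ k + ∑_{i<k} (⟪g k, ğ i⟫/⟪ğ i, ğ i⟫) • ğ i` where
`c k = d k − ∑_{i<k} ⟪g k, ğ i⟫/⟪ğ i, ğ i⟫`, the direction
`𝔡 = ∑ λ_k* • ğ k` satisfies `⟪g k, 𝔡⟫ = d k / (∑ i, 1/‖ğ i‖²)`. -/
theorem stmt2 {dim K : ℕ} (g gt : Fin K → EuclideanSpace ℝ (Fin dim))
    (d c : Fin K → ℝ) (hd : ∀ k, 0 < d k)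
    (hgt : ∀ k, gt k ≠ 0)
    (horth : ∀ i j, i ≠ j → ⟪gt i, gt j⟫_ℝ = 0)
    (hc : ∀ k, c k = d k - ∑ i ∈ Finset.Iio k, ⟪g k, gt i⟫_ℝ / ⟪gt i, gt i⟫_ℝ)
    (hcne : ∀ k, c k ≠ 0)
    (hdecomp : ∀ k, g k =
      c k • gt k + ∑ i ∈ Finset.Iio k, (⟪g k, gt i⟫_ℝ / ⟪gt i, gt i⟫_ℝ) • gt i)
    (lamStar : Fin K → ℝ)
    (hlamStar : ∀ k, lamStar k = (1 / ‖gt k‖ ^ 2) / (∑ i, 1 / ‖gt i‖ ^ 2)) :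
    ∀ k, ⟪g k, ∑ j, lamStar j • gt j⟫_ℝ = d k / (∑ i, 1 / ‖gt i‖ ^ 2) := by
  intro k
  set S : ℝ := ∑ i, 1 / ‖gt i‖ ^ 2 with hS
  have hSpos : 0 < S := by
    apply Finset.sum_pos
    · intro i _
      have : 0 < ‖gt i‖ := norm_pos_iff.mpr (hgt i)
      positivity
    · exact ⟨k, Finset.mem_univ k⟩
  have hnorm : ∀ i, ⟪gt i, gt i⟫_ℝ = ‖gt i‖ ^ 2 := fun i => real_inner_self_eq_norm_sq _
  have hnne : ∀ i, (‖gt i‖ : ℝ) ^ 2 ≠ 0 := fun i => by have : 0 < ‖gt i‖ := norm_pos_iff.mpr (hgt i); positivity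
  -- inner of each gt i with the direction
  have key : ∀ i, ⟪gt i, ∑ j, lamStar j • gt j⟫_ℝ = 1 / S := by
    intro i
    rw [inner_sum]
    rw [Finset.sum_eq_single i]
    · rw [real_inner_smul_right, hnorm, hlamStar]
      field_simp
      exact div_self (norm_ne_zero_iff.mpr (hgt i))
    · intro j _ hji
      rw [real_inner_smul_right, horth i j (Ne.symm hji), mul_zero]
    · intro h; exact absurd (Finset.mem_univ i) h
  calc ⟪g k, ∑ j, lamStar j • gt j⟫_ℝ
      = ⟪c k • gt k + ∑ i ∈ Finset.Iio k,
          (⟪g k, gt i⟫_ℝ / ⟪gt i, gt i⟫_ℝ) • gt i, ∑ j, lamStar j • gt j⟫_ℝ := by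
        rw [← hdecomp k]
    _ = c k * (1 / S) + ∑ i ∈ Finset.Iio k,
          (⟪g k, gt i⟫_ℝ / ⟪gt i, gt i⟫_ℝ) * (1 / S) := by
        rw [inner_add_left, real_inner_smul_left, key, sum_inner]
        congr 1
        exact Finset.sum_congr rfl fun i _ => by rw [real_inner_smul_left, key]
    _ = d k / S := by
        rw [← Finset.sum_mul, hc k]
        field_simp
        ring
end

section
/- Let f₁,...,f_K: ℝ^d → ℝ be L-smooth, let {ğ_k} be nonzero pairwise orthogonal vectors with ⟨∇f_k(θ), 𝔡⟩ = d_k / S where S = Σ_i 1/‖ğ_i‖², 𝔡 = Σ_k λ_k* ğ_k with λ_k* = (1/‖ğ_k‖²)/S, and all d_k > 0. If the step size η = S satisfies η ≤ (2/L)·min_k d_k, then f_k(θ − η𝔡) ≤ f_k(θ) for all k ∈ [K]. -/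
open scoped InnerProductSpace

lemma descent_lemma {F : Type*} [NormedAddCommGroup F] [InnerProductSpace ℝ F]
    [CompleteSpace F] (f : F → ℝ) (hf : Differentiable ℝ f) (L : ℝ)
    (hsmooth : ∀ x y, ‖gradient f x - gradient f y‖ ≤ L * ‖x - y‖)
    (x v : F) : f (x + v) ≤ f x + ⟪gradient f x, v⟫_ℝ + L / 2 * ‖v‖ ^ 2 := by
  set g : ℝ → ℝ := fun t => f (x + t • v) with hg
  have hder : ∀ t : ℝ, HasDerivAt g (⟪gradient f (x + t • v), v⟫_ℝ) t := by
    intro t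
    have h1 : HasDerivAt (fun t : ℝ => x + t • v) v t :=
      by simpa using ((hasDerivAt_id t).smul_const v).const_add x
    have h2 := ((hf (x + t • v)).hasGradientAt.hasFDerivAt).comp_hasDerivAt t h1
    refine HasDerivAt.congr_deriv (h2 : HasDerivAt g _ t) ?_
    simp
  set φ : ℝ → ℝ := fun t => g t - t * ⟪gradient f x, v⟫_ℝ - L / 2 * t ^ 2 * ‖v‖ ^ 2 with hφ
  have hφder : ∀ t : ℝ, HasDerivAt φ
      (⟪gradient f (x + t • v), v⟫_ℝ - ⟪gradient f x, v⟫_ℝ - L * t * ‖v‖ ^ 2) t := by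
    intro t
    have h3 : HasDerivAt (fun t : ℝ => t * ⟪gradient f x, v⟫_ℝ) (⟪gradient f x, v⟫_ℝ) t := by
      simpa using (hasDerivAt_id t).mul_const (⟪gradient f x, v⟫_ℝ)
    have h4 : HasDerivAt (fun t : ℝ => L / 2 * t ^ 2 * ‖v‖ ^ 2)
        (L * t * ‖v‖ ^ 2) t := by
      have := ((hasDerivAt_pow 2 t).const_mul (L / 2)).mul_const (‖v‖ ^ 2)
      refine this.congr_deriv ?_
      push_cast
      ring
    exact ((hder t).sub h3).sub h4
  have hmono : AntitoneOn φ (Set.Icc (0:ℝ) 1) := by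
    apply antitoneOn_of_deriv_nonpos (convex_Icc 0 1)
    · exact (Differentiable.continuous (fun t => (hφder t).differentiableAt)).continuousOn
    · intro t ht
      exact ((hφder t).differentiableAt).differentiableWithinAt
    · intro t ht
      rw [interior_Icc] at ht
      rw [(hφder t).deriv]
      have h5 : ⟪gradient f (x + t • v) - gradient f x, v⟫_ℝ ≤ L * t * ‖v‖ ^ 2 := by
        calc ⟪gradient f (x + t • v) - gradient f x, v⟫_ℝ
            ≤ ‖gradient f (x + t • v) - gradient f x‖ * ‖v‖ := real_inner_le_norm _ _
          _ ≤ (L * ‖(x + t • v) - x‖) * ‖v‖ :=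
              mul_le_mul_of_nonneg_right (hsmooth _ _) (norm_nonneg v)
          _ = L * t * ‖v‖ ^ 2 := by
              rw [add_sub_cancel_left, norm_smul, Real.norm_eq_abs,
                abs_of_pos ht.1]; ring
      rw [inner_sub_left] at h5
      linarith
  have h01 := hmono (Set.left_mem_Icc.2 zero_le_one) (Set.right_mem_Icc.2 zero_le_one)
    zero_le_one
  simp only [hφ, hg, zero_smul, add_zero, one_smul, one_pow, mul_one, one_mul] at h01
  simp only [zero_pow, mul_zero, zero_mul, sub_zero] at h01
  linarith



open scoped InnerProductSpace
open Finset

/-- With `S = ∑ i, 1/‖ğ i‖²`, `𝔡 = ∑ λ_k* • ğ k`,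
`⟪∇f_k(θ), 𝔡⟫ = d k / S` and `d k > 0`, if the step size `η = S` satisfies
`η ≤ (2/L) * min_k d k`, then `f k (θ − η • 𝔡) ≤ f k θ` for all `k`. -/
theorem stmt4 {d K : ℕ} [NeZero K] (f : Fin K → (EuclideanSpace ℝ (Fin d) → ℝ))
    (L : ℝ) (hL : 0 < L)
    (hf : ∀ k, Differentiable ℝ (f k))
    (hsmooth : ∀ k x y, ‖gradient (f k) x - gradient (f k) y‖ ≤ L * ‖x - y‖)
    (gt : Fin K → EuclideanSpace ℝ (Fin d))
    (hgt : ∀ k, gt k ≠ 0)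
    (horth : ∀ i j, i ≠ j → ⟪gt i, gt j⟫_ℝ = 0)
    (dk : Fin K → ℝ) (hdk : ∀ k, 0 < dk k)
    (S : ℝ) (hS : S = ∑ i, 1 / ‖gt i‖ ^ 2)
    (lamStar : Fin K → ℝ)
    (hlamStar : ∀ k, lamStar k = (1 / ‖gt k‖ ^ 2) / S)
    (𝔡 : EuclideanSpace ℝ (Fin d)) (h𝔡 : 𝔡 = ∑ k, lamStar k • gt k)
    (θ : EuclideanSpace ℝ (Fin d))
    (hdir : ∀ k, ⟪gradient (f k) θ, 𝔡⟫_ℝ = dk k / S)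
    (η : ℝ) (hη : η = S)
    (hstep : η ≤ (2 / L) * (Finset.univ.inf' Finset.univ_nonempty dk)) :
    ∀ k, f k (θ - η • 𝔡) ≤ f k θ := by
  intro k
  have hSpos : 0 < S := by
    rw [hS]
    apply Finset.sum_pos
    · intro i _
      have hi := hgt i
      have : ‖gt i‖ ≠ 0 := norm_ne_zero_iff.2 hi
      positivity
    · exact Finset.univ_nonempty
  have hSne : S ≠ 0 := ne_of_gt hSpos
  have hnorm : ‖𝔡‖ ^ 2 = 1 / S := by
    have h1 : ⟪𝔡, 𝔡⟫_ℝ = ∑ i, lamStar i ^ 2 * ‖gt i‖ ^ 2 := by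
      rw [h𝔡, sum_inner]
      refine Finset.sum_congr rfl fun i _ => ?_
      rw [inner_sum, Finset.sum_eq_single i]
      · rw [real_inner_smul_left, real_inner_smul_right, real_inner_self_eq_norm_sq]
        ring
      · intro j _ hj
        rw [real_inner_smul_left, real_inner_smul_right, horth i j (Ne.symm hj)]
        ring
      · intro h
        exact absurd (Finset.mem_univ i) h
    have h2 : ∀ i : Fin K, lamStar i ^ 2 * ‖gt i‖ ^ 2 = (1 / ‖gt i‖ ^ 2) / S ^ 2 := by
      intro i
      have hi : ‖gt i‖ ≠ 0 := norm_ne_zero_iff.2 (hgt i)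
      rw [hlamStar]
      field_simp
    rw [← real_inner_self_eq_norm_sq, h1, Finset.sum_congr rfl fun i _ => h2 i,
      ← Finset.sum_div, ← hS]
    field_simp
  have hinf : Finset.univ.inf' Finset.univ_nonempty dk ≤ dk k :=
    Finset.inf'_le _ (Finset.mem_univ k)
  have hLS : L * S / 2 ≤ dk k := by
    rw [hη] at hstep
    have h3 : (0:ℝ) < 2 / L := by positivity
    have h4 : S ≤ (2 / L) * dk k :=
      le_trans hstep (mul_le_mul_of_nonneg_left hinf (le_of_lt h3))
    have h5 : L * S ≤ L * ((2 / L) * dk k) := mul_le_mul_of_nonneg_left h4 (le_of_lt hL)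
    have h6 : L * ((2 / L) * dk k) = 2 * dk k := by field_simp
    linarith
  have key := descent_lemma (f k) (hf k) L (hsmooth k) θ (-(η • 𝔡))
  rw [← sub_eq_add_neg] at key
  have hi : ⟪gradient (f k) θ, -(η • 𝔡)⟫_ℝ = -(dk k) := by
    rw [inner_neg_right, real_inner_smul_right, hdir k, hη]
    field_simp
  have hn : ‖-(η • 𝔡)‖ ^ 2 = S := by
    rw [norm_neg, norm_smul, mul_pow, hnorm, hη, Real.norm_eq_abs, sq_abs]
    field_simp
  rw [hi, hn] at key
  linarith
end
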